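/- For all real x and all y ≥ x, and for a stochastic matrix with entries p₀₀, p₀₁, p₁₀, p₁₁ ∈ (0,1) satisfying the conditions above with p₀₁ ≠ p₁₁, the function f(x) = (p₁₁ - p₀₁)·ln(1 + (c₀ - c₁)/(eˣ + c₁)) with c₀ = p₀₁/p₀₀, c₁ = p₁₁/p₁₀ satisfies 0 ≤ f(y) - f(x) ≤ (√(p₀₀p₁₁) - √(p₀₁p₁₀))² · (y - x). -/

import Mathlib

theorem amgm_aux (e u v : ℝ) : e * (u + v) ^ 2 ≤ (e + u ^ 2) * (e + v ^ 2) := by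
  nlinarith [sq_nonneg (e - u * v)]

set_option maxHeartbeats 1000000 in

theorem stmt_7 (p₀₀ p₀₁ p₁₀ p₁₁ : ℝ)
    (h00 : p₀₀ ∈ Set.Ioo (0:ℝ) 1) (h01 : p₀₁ ∈ Set.Ioo (0:ℝ) 1)
    (h10 : p₁₀ ∈ Set.Ioo (0:ℝ) 1) (h11 : p₁₁ ∈ Set.Ioo (0:ℝ) 1)
    (hrow0 : p₀₀ + p₀₁ = 1) (hrow1 : p₁₀ + p₁₁ = 1) (hne : p₀₁ ≠ p₁₁)
    (c₀ c₁ : ℝ) (hc₀ : c₀ = p₀₁ / p₀₀) (hc₁ : c₁ = p₁₁ / p₁₀)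
    (f : ℝ → ℝ)
    (hf : f = fun x => (p₁₁ - p₀₁) * Real.log (1 + (c₀ - c₁) / (Real.exp x + c₁)))
    (x y : ℝ) (hxy : x ≤ y) :
    0 ≤ f y - f x ∧
    f y - f x ≤ (Real.sqrt (p₀₀ * p₁₁) - Real.sqrt (p₀₁ * p₁₀)) ^ 2 * (y - x) := by
  obtain ⟨h00a, h00b⟩ := h00
  obtain ⟨h01a, h01b⟩ := h01
  obtain ⟨h10a, h10b⟩ := h10
  obtain ⟨h11a, h11b⟩ := h11
  have hc0pos : 0 < c₀ := by rw [hc₀]; positivity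
  have hc1pos : 0 < c₁ := by rw [hc₁]; positivity
  set L : ℝ := (Real.sqrt (p₀₀ * p₁₁) - Real.sqrt (p₀₁ * p₁₀)) ^ 2 with hL
  set g : ℝ → ℝ := fun t => (p₁₁ - p₀₁) * (c₁ - c₀) * Real.exp t /
      ((Real.exp t + c₀) * (Real.exp t + c₁)) with hg
  have hden : ∀ t : ℝ, 0 < (Real.exp t + c₀) * (Real.exp t + c₁) := fun t => by positivity
  -- derivative computation
  have key : ∀ t : ℝ, HasDerivAt f (g t) t := by
    intro t
    have he : 0 < Real.exp t := Real.exp_pos t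
    have h1 : HasDerivAt (fun s : ℝ => Real.exp s + c₁) (Real.exp t) t :=
      (Real.hasDerivAt_exp t).add_const c₁
    have hne1 : Real.exp t + c₁ ≠ 0 := by positivity
    have h2 : HasDerivAt (fun s : ℝ => (c₀ - c₁) / (Real.exp s + c₁))
        ((0 * (Real.exp t + c₁) - (c₀ - c₁) * Real.exp t) / (Real.exp t + c₁) ^ 2) t :=
      (hasDerivAt_const t (c₀ - c₁)).div h1 hne1
    have h3 := h2.const_add (1 : ℝ)
    have h5 : 1 + (c₀ - c₁) / (Real.exp t + c₁) = (Real.exp t + c₀) / (Real.exp t + c₁) := by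
      field_simp; ring
    have hu : 1 + (c₀ - c₁) / (Real.exp t + c₁) ≠ 0 := by
      rw [h5]; positivity
    have h4 := (h3.log hu).const_mul (p₁₁ - p₀₁)
    rw [hf]
    refine h4.congr_deriv ?_
    rw [hg, h5]
    have hne0 : Real.exp t + c₀ ≠ 0 := by positivity
    field_simp
    ring
  -- sign of the key coefficient
  have hp00 : p₀₀ ≠ 0 := ne_of_gt h00a
  have hp10 : p₁₀ ≠ 0 := ne_of_gt h10a
  have hK : (p₁₁ - p₀₁) * (c₁ - c₀) = (p₁₁ - p₀₁) ^ 2 / (p₀₀ * p₁₀) := by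
    rw [hc₀, hc₁]
    field_simp
    rw [show p₀₀ = 1 - p₀₁ by linarith, show p₁₀ = 1 - p₁₁ by linarith]
    ring
  have hKnn : 0 ≤ (p₁₁ - p₀₁) * (c₁ - c₀) := by rw [hK]; positivity
  have hgnn : ∀ t, 0 ≤ g t := by
    intro t
    exact div_nonneg (mul_nonneg hKnn (Real.exp_pos t).le) (hden t).le
  -- relation between L and the coefficient
  set a := Real.sqrt p₀₀ with ha'
  set b := Real.sqrt p₀₁ with hb'
  set c := Real.sqrt p₁₀ with hc'
  set d := Real.sqrt p₁₁ with hd'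
  have ha : a ^ 2 = p₀₀ := Real.sq_sqrt h00a.le
  have hb : b ^ 2 = p₀₁ := Real.sq_sqrt h01a.le
  have hc : c ^ 2 = p₁₀ := Real.sq_sqrt h10a.le
  have hd : d ^ 2 = p₁₁ := Real.sq_sqrt h11a.le
  have hapos : 0 < a := Real.sqrt_pos.2 h00a
  have hbpos : 0 < b := Real.sqrt_pos.2 h01a
  have hcpos : 0 < c := Real.sqrt_pos.2 h10a
  have hdpos : 0 < d := Real.sqrt_pos.2 h11a
  have hsq0 : Real.sqrt c₀ = b / a := by
    have : c₀ = (b / a) ^ 2 := by rw [hc₀, ← ha, ← hb]; ring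
    rw [this, Real.sqrt_sq (by positivity)]
  have hsq1 : Real.sqrt c₁ = d / c := by
    have : c₁ = (d / c) ^ 2 := by rw [hc₁, ← hc, ← hd]; ring
    rw [this, Real.sqrt_sq (by positivity)]
  have hLad : Real.sqrt (p₀₀ * p₁₁) = a * d := by
    rw [← ha, ← hd, show a ^ 2 * d ^ 2 = (a * d) ^ 2 by ring,
      Real.sqrt_sq (by positivity)]
  have hLbc : Real.sqrt (p₀₁ * p₁₀) = b * c := by
    rw [← hb, ← hc, show b ^ 2 * c ^ 2 = (b * c) ^ 2 by ring,
      Real.sqrt_sq (by positivity)]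
  have hLs : (p₁₁ - p₀₁) * (c₁ - c₀) = L * (Real.sqrt c₀ + Real.sqrt c₁) ^ 2 := by
    rw [hL, hLad, hLbc, hsq0, hsq1, hc₀, hc₁, ← ha, ← hb, ← hc, ← hd]
    have hrow0' : a ^ 2 + b ^ 2 = 1 := by rw [ha, hb]; exact hrow0
    have hrow1' : c ^ 2 + d ^ 2 = 1 := by rw [hc, hd]; exact hrow1
    have hmid : a ^ 2 * d ^ 2 - b ^ 2 * c ^ 2 = d ^ 2 - b ^ 2 := by
      linear_combination d ^ 2 * hrow0' - b ^ 2 * hrow1'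
    have ha0 : a ≠ 0 := ne_of_gt hapos
    have hc0 : c ≠ 0 := ne_of_gt hcpos
    have e1 : d ^ 2 / c ^ 2 - b ^ 2 / a ^ 2 = (d ^ 2 - b ^ 2) / (a ^ 2 * c ^ 2) := by
      rw [← hmid]; field_simp
    have e2 : (b / a + d / c) ^ 2 = (b * c + a * d) ^ 2 / (a ^ 2 * c ^ 2) := by
      field_simp
    rw [e1, e2, mul_div_assoc', mul_div_assoc',
      div_eq_div_iff (by positivity) (by positivity)]
    linear_combination (-(a ^ 2 * c ^ 2) * (a ^ 2 * d ^ 2 - b ^ 2 * c ^ 2 + d ^ 2 - b ^ 2)) * hmid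
  have hLnn : 0 ≤ L := by rw [hL]; positivity
  -- upper bound on the derivative
  have hgL : ∀ t, g t ≤ L := by
    intro t
    have he := Real.exp_pos t
    rw [hg]
    dsimp only
    rw [div_le_iff₀ (hden t)]
    have h1 : Real.exp t * (Real.sqrt c₀ + Real.sqrt c₁) ^ 2 ≤
        (Real.exp t + c₀) * (Real.exp t + c₁) := by
      have h2 := amgm_aux (Real.exp t) (Real.sqrt c₀) (Real.sqrt c₁)
      rwa [Real.sq_sqrt hc0pos.le, Real.sq_sqrt hc1pos.le] at h2
    calc (p₁₁ - p₀₁) * (c₁ - c₀) * Real.exp t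
        = L * (Real.exp t * (Real.sqrt c₀ + Real.sqrt c₁) ^ 2) := by rw [hLs]; ring
      _ ≤ L * ((Real.exp t + c₀) * (Real.exp t + c₁)) :=
          mul_le_mul_of_nonneg_left h1 hLnn
      _ = L * ((Real.exp t + c₀) * (Real.exp t + c₁)) := rfl
  -- conclude via monotonicity
  have hdiff : Differentiable ℝ f := fun t => (key t).differentiableAt
  have hmono : Monotone f := by
    apply monotone_of_deriv_nonneg hdiff
    intro t
    rw [(key t).deriv]
    exact hgnn t
  have hFdiff : Differentiable ℝ (fun t => L * t - f t) :=
    fun t => ((differentiable_id.const_mul L) t).sub (hdiff t)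
  have hFmono : Monotone (fun t => L * t - f t) := by
    apply monotone_of_deriv_nonneg hFdiff
    intro t
    have hF : HasDerivAt (fun t => L * t - f t) (L * 1 - g t) t :=
      ((hasDerivAt_id t).const_mul L).sub (key t)
    rw [hF.deriv]
    linarith [hgL t]
  refine ⟨by linarith [hmono hxy], ?_⟩
  have := hFmono hxy
  dsimp at this
  linarith
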